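/- Let F : A → B be a fully faithful exact functor with adjoints L ⊣ F ⊣ R, twist T, and dual twist T'. Then the cocone P of the canonical map φ : R → L fits into triangles R T' → R → L and R → L → L T [1]; that is, P ≅ R T' and P ≅ L T [−1]. -/

import Mathlib

open CategoryTheory Limits Pretriangulated

lemma cocone_key {A B : Type*} [Category A] [Category B]
    (F : A ⥤ B) (L R : B ⥤ A) (adjL : L ⊣ F) (adjR : F ⊣ R)
    [F.Full] [F.Faithful] (X : B) :
    adjL.counit.app (R.obj X) ≫ R.map (adjL.unit.app X) =
      L.map (adjR.counit.app X) ≫ adjR.unit.app (L.obj X) := by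
  apply (adjL.homEquiv _ _).injective
  simp only [Adjunction.homEquiv_unit, Functor.map_comp]
  have h1 : adjR.counit.app (F.obj (L.obj X)) ≫ F.map (adjR.unit.app (L.obj X)) = 𝟙 _ := by
    rw [← cancel_epi (F.map (adjR.unit.app (L.obj X)))]
    simp [adjR.left_triangle_components]
  have h2 := adjR.counit.naturality (adjL.unit.app X)
  have h3 := adjL.unit.naturality (adjR.counit.app X)
  simp only [Functor.comp_map, Functor.id_map, Functor.comp_obj, Functor.id_obj] at h1 h2 h3
  rw [adjL.right_triangle_components_assoc, ← Category.assoc, ← h3, Category.assoc,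
    ← Category.assoc, ← h2, Category.assoc, h1, Category.comp_id]

/-- For an exceptional functor `F` with adjoints `L ⊣ F ⊣ R`,
twist `T` and dual twist `T'`, the cocone `P` of the canonical map
`φ : R ⟶ L` is isomorphic to both `R T'` and `L T [-1]`: there are
distinguished triangles `R T' X → R X → L X` and `R X → L X → L T X`
(the latter being the rotation of `L T [-1] → R → L`), objectwise, with middle
map `φ`. -/
theorem cocone_of_canonical_map {A B : Type*} [Category A] [Category B]
    [HasZeroObject A] [HasZeroObject B] [Preadditive A] [Preadditive B]
    [HasShift A ℤ] [HasShift B ℤ]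
    [∀ n : ℤ, (shiftFunctor A n).Additive] [∀ n : ℤ, (shiftFunctor B n).Additive]
    [Pretriangulated A] [Pretriangulated B]
    (F : A ⥤ B) (L R : B ⥤ A)
    [F.CommShift ℤ] [L.CommShift ℤ] [R.CommShift ℤ]
    [F.IsTriangulated] [L.IsTriangulated] [R.IsTriangulated]
    (adjL : L ⊣ F) (adjR : F ⊣ R) [F.Full] [F.Faithful]
    (T : B ⥤ B) (α : 𝟭 B ⟶ T) (β : T ⟶ (R ⋙ F) ⋙ shiftFunctor B (1 : ℤ))
    (hT : ∀ X : B, Triangle.mk (adjR.counit.app X) (α.app X) (β.app X) ∈ distTriang B)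
    (T' : B ⥤ B) (δ : T' ⟶ 𝟭 B) (γ : L ⋙ F ⟶ T' ⋙ shiftFunctor B (1 : ℤ))
    (hT' : ∀ X : B, Triangle.mk (δ.app X) (adjL.unit.app X) (γ.app X) ∈ distTriang B) :
    -- the triangle R T' → R → L
    (∃ (u : T' ⋙ R ⟶ R) (w : L ⟶ (T' ⋙ R) ⋙ shiftFunctor A (1 : ℤ)),
      ∀ X : B, Triangle.mk (u.app X)
        ((Functor.whiskerRight adjL.unit R ≫ inv (Functor.whiskerLeft L adjR.unit)).app X)
        (w.app X) ∈ distTriang A) ∧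
    -- the rotated triangle R → L → L T (so that the cocone of φ is L T [-1])
    (∃ (v : L ⟶ T ⋙ L) (w' : T ⋙ L ⟶ R ⋙ shiftFunctor A (1 : ℤ)),
      ∀ X : B, Triangle.mk
        ((Functor.whiskerRight adjL.unit R ≫ inv (Functor.whiskerLeft L adjR.unit)).app X)
        (v.app X) (w'.app X) ∈ distTriang A) := by
  constructor
  · refine ⟨Functor.whiskerRight δ R,
      Functor.whiskerLeft L adjR.unit ≫ Functor.whiskerRight γ R ≫
        Functor.whiskerLeft T' (R.commShiftIso (1 : ℤ)).hom, fun X => ?_⟩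
    refine isomorphic_distinguished _ (R.map_distinguished _ (hT' X)) _ ?_
    refine Triangle.isoMk _ _ (Iso.refl _) (Iso.refl _) (asIso (adjR.unit.app (L.obj X)) : L.obj X ≅ R.obj (F.obj (L.obj X)))
      ?_ ?_ ?_
    · simp [Functor.mapTriangle, Triangle.mk]
    · simp [Functor.mapTriangle, NatIso.isIso_inv_app, Triangle.mk]
    · simp [Functor.mapTriangle, Triangle.mk]
  · refine ⟨Functor.whiskerRight α L,
      Functor.whiskerRight β L ≫ Functor.whiskerLeft (R ⋙ F) (L.commShiftIso (1 : ℤ)).hom ≫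
        Functor.whiskerRight (Functor.whiskerLeft R adjL.counit) (shiftFunctor A (1 : ℤ)), fun X => ?_⟩
    refine isomorphic_distinguished _ (L.map_distinguished _ (hT X)) _ ?_
    refine Triangle.isoMk _ _ ((asIso (adjL.counit.app (R.obj X))).symm : R.obj X ≅ L.obj (F.obj (R.obj X))) (Iso.refl _)
      (Iso.refl _) ?_ ?_ ?_
    · have := cocone_key F L R adjL adjR X
      simp only [Functor.mapTriangle, Triangle.mk]
      simp [NatIso.isIso_inv_app, IsIso.eq_inv_comp, ← Category.assoc, this,
        IsIso.comp_inv_eq]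
    · simp [Functor.mapTriangle, Triangle.mk]
    · simp [Functor.mapTriangle, Triangle.mk]
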